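/- The explicit matrix elements of the 3d R matrix enjoy the symmetries R^{n'₁,n'₂,n'₃}_{n₁,n₂,n₃} = R^{n₁,n₂,n₃}_{n'₁,n'₂,n'₃} = R^{n'₃,n'₂,n'₁}_{n₃,n₂,n₁}. -/

import Mathlib

noncomputable def qPoch (a q : ℝ) (m : ℕ) : ℝ := ∏ i ∈ Finset.range m, (1 - a * q ^ i)

/-- The reduced matrix element `R̄^{n'₁,n'₂,n'₃}_{n₁,n₂,n₃}`. -/
noncomputable def Rbar (p : ℝ) (n1 n2 n3 n1' n2' n3' : ℕ) : ℝ :=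
  (-1) ^ n2' * p ^ (n1 * n3 + n2' * (n1 + n3 + 1)) / qPoch (p ^ 2) (p ^ 2) n2' *
    ∑ k ∈ Finset.Icc (n2' - n2) (min n1 (min n3 n2')),
      qPoch ((p ^ (2 * n1))⁻¹) (p ^ 2) k * qPoch ((p ^ (2 * n3))⁻¹) (p ^ 2) k *
        qPoch ((p ^ (2 * n2'))⁻¹) (p ^ 2) k *
        qPoch (p ^ (2 * (n2 + k + 1) - 2 * n2')) (p ^ 2) (n2' - k) * p ^ (2 * k) /
        qPoch (p ^ 2) (p ^ 2) k

/-- The matrix element `R^{n'₁,n'₂,n'₃}_{n₁,n₂,n₃}` of the 3d R matrix. -/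
noncomputable def Rmat (p : ℝ) (n1 n2 n3 n1' n2' n3' : ℕ) : ℝ :=
  Real.sqrt ((qPoch (p ^ 2) (p ^ 2) n1' * qPoch (p ^ 2) (p ^ 2) n2' * qPoch (p ^ 2) (p ^ 2) n3') /
      (qPoch (p ^ 2) (p ^ 2) n1 * qPoch (p ^ 2) (p ^ 2) n2 * qPoch (p ^ 2) (p ^ 2) n3)) *
    (if n1 + n2 = n1' + n2' ∧ n2 + n3 = n2' + n3' then (1 : ℝ) else 0) *
    Rbar p n1 n2 n3 n1' n2' n3'

lemma qPoch_succ (a q : ℝ) (m : ℕ) : qPoch a q (m+1) = qPoch a q m * (1 - a * q ^ m) :=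
  Finset.prod_range_succ _ _

lemma f_pos {p : ℝ} (hp : 0 < p) (hp1 : p < 1) (m : ℕ) : 0 < qPoch (p^2) (p^2) m := by
  apply Finset.prod_pos
  intro i _
  have h1 : p^2 * (p^2)^i < 1 := by
    calc p^2 * (p^2)^i ≤ p^2 * 1 := by
          apply mul_le_mul_of_nonneg_left _ (sq_nonneg p)
          exact pow_le_one₀ (sq_nonneg p) (by nlinarith)
      _ < 1 := by nlinarith
  linarith

lemma L3 (p : ℝ) (a j : ℕ) :
    qPoch (p^(2*(a+1))) (p^2) j * qPoch (p^2) (p^2) a = qPoch (p^2) (p^2) (a+j) := by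
  induction j with
  | zero => simp [qPoch]
  | succ j ih =>
      rw [qPoch_succ, show a + (j+1) = (a+j)+1 from rfl, qPoch_succ, ← ih]
      have : p^(2*(a+1)) * (p^2)^j = p^2 * (p^2)^(a+j) := by
        rw [← pow_mul, ← pow_mul, ← pow_add, ← pow_add]; ring_nf
      rw [this]; ring

lemma L2 (p : ℝ) (hp : p ≠ 0) (n : ℕ) : ∀ k ≤ n,
    p^(2*n*k) * qPoch (p^2) (p^2) (n-k) * qPoch ((p^(2*n))⁻¹) (p^2) k
      = (-1:ℝ)^k * p^(k*(k-1)) * qPoch (p^2) (p^2) n := by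
  intro k hk
  induction k with
  | zero => simp [qPoch]
  | succ k ih =>
      have hk' : k ≤ n := by omega
      have ih := ih hk'
      rw [qPoch_succ]
      have hnk : n - k = (n - (k+1)) + 1 := by omega
      have hfact : qPoch (p^2) (p^2) (n-k) = qPoch (p^2) (p^2) (n-(k+1)) * (1 - p^(2*(n-k))) := by
        rw [hnk, qPoch_succ]
        have : p^2 * (p^2)^(n-(k+1)) = p^(2*(n-k)) := by
          rw [← pow_mul, ← pow_add]; congr 1; omega
        rw [this, ← hnk]
      have hkey : p^(2*n) * (1 - (p^(2*n))⁻¹ * (p^2)^k) = -(p^(2*k)) * (1 - p^(2*(n-k))) := by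
        have h1 : (p^(2*n)) ≠ 0 := pow_ne_zero _ hp
        have h2 : p^(2*k) * p^(2*(n-k)) = p^(2*n) := by
          rw [← pow_add]; congr 1; omega
        field_simp
        rw [← pow_mul]
        nlinarith [h2]
      have e1 : p^(2*n*(k+1)) = p^(2*n*k) * p^(2*n) := by rw [← pow_add]; ring_nf
      have e2 : p^((k+1)*k) = p^(k*(k-1)) * p^(2*k) := by
        rw [← pow_add]; congr 1
        cases k with
        | zero => rfl
        | succ m => simp [Nat.succ_sub_one]; ring
      calc p^(2*n*(k+1)) * qPoch (p^2) (p^2) (n-(k+1)) *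
            (qPoch ((p^(2*n))⁻¹) (p^2) k * (1 - (p^(2*n))⁻¹ * (p^2)^k))
          = (p^(2*n*k) * (qPoch (p^2) (p^2) (n-(k+1)) * (1 - p^(2*(n-k)))) *
              qPoch ((p^(2*n))⁻¹) (p^2) k) * (-(p^(2*k))) := by
            rw [e1]
            linear_combination (p^(2*n*k) * qPoch (p^2) (p^2) (n-(k+1)) *
              qPoch ((p^(2*n))⁻¹) (p^2) k) * hkey
        _ = ((-1:ℝ)^k * p^(k*(k-1)) * qPoch (p^2) (p^2) n) * (-(p^(2*k))) := by
            rw [← hfact, ih]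
        _ = (-1:ℝ)^(k+1) * p^((k+1)*(k+1-1)) * qPoch (p^2) (p^2) n := by
            rw [show (k+1)-1 = k from rfl, e2]; ring


lemma L2div (p : ℝ) (hp : 0 < p) (hp1 : p < 1) (n k : ℕ) (hk : k ≤ n) :
    qPoch ((p^(2*n))⁻¹) (p^2) k
      = ((-1:ℝ)^k * p^(k*k) * qPoch (p^2) (p^2) n) /
          (p^(2*n*k + k) * qPoch (p^2) (p^2) (n-k)) := by
  have hkk : k*(k-1) + k = k*k := by
    cases k with
    | zero => rfl
    | succ m => simp [Nat.succ_sub_one]; ring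
  have h := L2 p hp.ne' n k hk
  rw [eq_div_iff (mul_ne_zero (pow_ne_zero _ hp.ne') (f_pos hp hp1 _).ne')]
  have h2 : p^(2*n*k + k) * qPoch (p^2) (p^2) (n-k) * qPoch ((p^(2*n))⁻¹) (p^2) k
      = (-1:ℝ)^k * p^(k*k) * qPoch (p^2) (p^2) n := by
    rw [pow_add, ← hkk, pow_add]
    linear_combination p^k * h
  linear_combination h2

lemma L3div (p : ℝ) (hp : 0 < p) (hp1 : p < 1) (a j : ℕ) :
    qPoch (p^(2*(a+1))) (p^2) j = qPoch (p^2) (p^2) (a+j) / qPoch (p^2) (p^2) a := by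
  rw [eq_div_iff (f_pos hp hp1 a).ne']
  exact L3 p a j

noncomputable def Tm (p : ℝ) (n1 n2 n3 n1' n2' n3' k : ℕ) : ℝ :=
  qPoch (p^2) (p^2) n1' * qPoch (p^2) (p^2) n2' * qPoch (p^2) (p^2) n3' *
    ((-1) ^ n2' * p ^ (n1 * n3 + n2' * (n1 + n3 + 1)) / qPoch (p ^ 2) (p ^ 2) n2' *
      (qPoch ((p ^ (2 * n1))⁻¹) (p ^ 2) k * qPoch ((p ^ (2 * n3))⁻¹) (p ^ 2) k *
        qPoch ((p ^ (2 * n2'))⁻¹) (p ^ 2) k *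
        qPoch (p ^ (2 * (n2 + k + 1) - 2 * n2')) (p ^ 2) (n2' - k) * p ^ (2 * k) /
        qPoch (p ^ 2) (p ^ 2) k))

lemma T_symm (p : ℝ) (hp : 0 < p) (hp1 : p < 1) (n1 n2 n3 n1' n2' n3' k : ℕ)
    (h1 : n1 + n2 = n1' + n2') (h2 : n2 + n3 = n2' + n3') (hd : n2 ≤ n2')
    (hk1 : k ≤ n1) (hk3 : k ≤ n3) (hk2 : k ≤ n2') (hkl : n2' - n2 ≤ k) :
    Tm p n1 n2 n3 n1' n2' n3' k = Tm p n1' n2' n3' n1 n2 n3 (k - (n2' - n2)) := by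
  obtain ⟨d, rfl⟩ : ∃ d, n2' = n2 + d := ⟨n2' - n2, by omega⟩
  obtain ⟨j, rfl⟩ : ∃ j, k = j + d := ⟨k - d, by omega⟩
  have e1 : n1 = n1' + d := by omega
  have e3 : n3 = n3' + d := by omega
  subst e1 e3
  rw [show j + d - (n2 + d - n2) = j from by omega]
  unfold Tm
  rw [L2div p hp hp1 (n1'+d) (j+d) (by omega), L2div p hp hp1 (n3'+d) (j+d) (by omega),
      L2div p hp hp1 (n2+d) (j+d) (by omega),
      show 2 * (n2 + (j + d) + 1) - 2 * (n2 + d) = 2*(j+1) from by omega,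
      show n2 + d - (j + d) = n2 - j from by omega,
      L3div p hp hp1 j (n2 - j), show j + (n2 - j) = n2 from by omega,
      L2div p hp hp1 n1' j (by omega), L2div p hp hp1 n3' j (by omega),
      L2div p hp hp1 n2 j (by omega),
      show 2 * (n2 + d + j + 1) - 2 * n2 = 2*((j+d)+1) from by omega,
      L3div p hp hp1 (j+d) (n2 - j), show j + d + (n2 - j) = n2 + d from by omega,
      show n1' + d - (j + d) = n1' - j from by omega,
      show n3' + d - (j + d) = n3' - j from by omega]
  rcases Nat.even_or_odd d with hpar | hpar
  · simp only [pow_add, hpar.neg_one_pow]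
    have h0 := hp.ne'
    have A1 := (f_pos hp hp1 n1').ne'
    have A2 := (f_pos hp hp1 n2).ne'
    have A3 := (f_pos hp hp1 n3').ne'
    have B1 := (f_pos hp hp1 (n1'+d)).ne'
    have B2 := (f_pos hp hp1 (n2+d)).ne'
    have B3 := (f_pos hp hp1 (n3'+d)).ne'
    have C1 := (f_pos hp hp1 (n1'-j)).ne'
    have C2 := (f_pos hp hp1 (n2-j)).ne'
    have C3 := (f_pos hp hp1 (n3'-j)).ne'
    have D1 := (f_pos hp hp1 j).ne'
    have D2 := (f_pos hp hp1 (j+d)).ne'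
    field_simp
    ring
  · simp only [pow_add, hpar.neg_one_pow]
    have h0 := hp.ne'
    have A1 := (f_pos hp hp1 n1').ne'
    have A2 := (f_pos hp hp1 n2).ne'
    have A3 := (f_pos hp hp1 n3').ne'
    have B1 := (f_pos hp hp1 (n1'+d)).ne'
    have B2 := (f_pos hp hp1 (n2+d)).ne'
    have B3 := (f_pos hp hp1 (n3'+d)).ne'
    have C1 := (f_pos hp hp1 (n1'-j)).ne'
    have C2 := (f_pos hp hp1 (n2-j)).ne'
    have C3 := (f_pos hp hp1 (n3'-j)).ne'
    have D1 := (f_pos hp hp1 j).ne'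
    have D2 := (f_pos hp hp1 (j+d)).ne'
    field_simp
    ring


lemma sum_Tm (p : ℝ) (n1 n2 n3 n1' n2' n3' : ℕ) :
    qPoch (p^2) (p^2) n1' * qPoch (p^2) (p^2) n2' * qPoch (p^2) (p^2) n3' *
      Rbar p n1 n2 n3 n1' n2' n3'
    = ∑ k ∈ Finset.Icc (n2' - n2) (min n1 (min n3 n2')),
        Tm p n1 n2 n3 n1' n2' n3' k := by
  simp only [Rbar, Tm, Finset.mul_sum]

lemma key (p : ℝ) (hp : 0 < p) (hp1 : p < 1) (n1 n2 n3 n1' n2' n3' : ℕ)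
    (h1 : n1 + n2 = n1' + n2') (h2 : n2 + n3 = n2' + n3') :
    qPoch (p^2) (p^2) n1' * qPoch (p^2) (p^2) n2' * qPoch (p^2) (p^2) n3' *
      Rbar p n1 n2 n3 n1' n2' n3'
    = qPoch (p^2) (p^2) n1 * qPoch (p^2) (p^2) n2 * qPoch (p^2) (p^2) n3 *
      Rbar p n1' n2' n3' n1 n2 n3 := by
  rw [sum_Tm, sum_Tm]
  refine Finset.sum_nbij' (i := fun k => k + n2 - n2') (j := fun k => k + n2' - n2)
    ?_ ?_ ?_ ?_ ?_
  · intro a ha; (try dsimp only); simp only [Finset.mem_Icc] at *; omega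
  · intro a ha; (try dsimp only); simp only [Finset.mem_Icc] at *; omega
  · intro a ha; (try dsimp only); simp only [Finset.mem_Icc] at ha; omega
  · intro a ha; (try dsimp only); simp only [Finset.mem_Icc] at ha; omega
  · intro a ha
    try dsimp only
    simp only [Finset.mem_Icc] at ha
    rcases le_or_gt n2 n2' with hd | hd
    · rw [show a + n2 - n2' = a - (n2' - n2) from by omega]
      exact T_symm p hp hp1 n1 n2 n3 n1' n2' n3' a h1 h2 hd (by omega) (by omega)
        (by omega) (by omega)
    · have := T_symm p hp hp1 n1' n2' n3' n1 n2 n3 (a + n2 - n2') h1.symm h2.symm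
        (by omega) (by omega) (by omega) (by omega) (by omega)
      rw [this, show a + n2 - n2' - (n2 - n2') = a from by omega]

lemma Rbar_swap (p : ℝ) (n1 n2 n3 n1' n2' n3' : ℕ) :
    Rbar p n3 n2 n1 n3' n2' n1' = Rbar p n1 n2 n3 n1' n2' n3' := by
  unfold Rbar
  rw [show min n3 (min n1 n2') = min n1 (min n3 n2') from by omega,
      show n3 * n1 + n2' * (n3 + n1 + 1) = n1 * n3 + n2' * (n1 + n3 + 1) from by ring]
  congr 1
  exact Finset.sum_congr rfl fun k _ => by ring

/-- The matrix elements of the 3d R matrix enjoy the symmetries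
`R^{n'₁,n'₂,n'₃}_{n₁,n₂,n₃} = R^{n₁,n₂,n₃}_{n'₁,n'₂,n'₃} = R^{n'₃,n'₂,n'₁}_{n₃,n₂,n₁}`. -/
theorem Rmat_symmetry (p : ℝ) (hp : 0 < p) (hp1 : p < 1) (n1 n2 n3 n1' n2' n3' : ℕ) :
    Rmat p n1 n2 n3 n1' n2' n3' = Rmat p n1' n2' n3' n1 n2 n3 ∧
    Rmat p n1 n2 n3 n1' n2' n3' = Rmat p n3 n2 n1 n3' n2' n1' := by
  constructor
  · by_cases hc : n1 + n2 = n1' + n2' ∧ n2 + n3 = n2' + n3'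
    · unfold Rmat
      rw [if_pos hc, if_pos ⟨hc.1.symm, hc.2.symm⟩, mul_one, mul_one]
      set P := qPoch (p ^ 2) (p ^ 2) n1 * qPoch (p ^ 2) (p ^ 2) n2 * qPoch (p ^ 2) (p ^ 2) n3
        with hP
      set P' := qPoch (p ^ 2) (p ^ 2) n1' * qPoch (p ^ 2) (p ^ 2) n2' * qPoch (p ^ 2) (p ^ 2) n3'
        with hP'
      have hPpos : 0 < P := by
        exact mul_pos (mul_pos (f_pos hp hp1 _) (f_pos hp hp1 _)) (f_pos hp hp1 _)
      have hPpos' : 0 < P' := by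
        exact mul_pos (mul_pos (f_pos hp hp1 _) (f_pos hp hp1 _)) (f_pos hp hp1 _)
      have K : P' * Rbar p n1 n2 n3 n1' n2' n3' = P * Rbar p n1' n2' n3' n1 n2 n3 :=
        key p hp hp1 n1 n2 n3 n1' n2' n3' hc.1 hc.2
      rw [Real.sqrt_div hPpos'.le P, Real.sqrt_div hPpos.le P',
          div_mul_eq_mul_div, div_mul_eq_mul_div,
          div_eq_div_iff (Real.sqrt_pos.2 hPpos).ne' (Real.sqrt_pos.2 hPpos').ne']
      have m1 : Real.sqrt P * Real.sqrt P = P := Real.mul_self_sqrt hPpos.le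
      have m2 : Real.sqrt P' * Real.sqrt P' = P' := Real.mul_self_sqrt hPpos'.le
      linear_combination Rbar p n1 n2 n3 n1' n2' n3' * m2 -
        Rbar p n1' n2' n3' n1 n2 n3 * m1 + K
    · unfold Rmat
      rw [if_neg hc, if_neg fun h => hc ⟨h.1.symm, h.2.symm⟩]
      ring
  · unfold Rmat
    rw [Rbar_swap]
    rw [show (qPoch (p ^ 2) (p ^ 2) n3' * qPoch (p ^ 2) (p ^ 2) n2' * qPoch (p ^ 2) (p ^ 2) n1') /
          (qPoch (p ^ 2) (p ^ 2) n3 * qPoch (p ^ 2) (p ^ 2) n2 * qPoch (p ^ 2) (p ^ 2) n1)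
        = (qPoch (p ^ 2) (p ^ 2) n1' * qPoch (p ^ 2) (p ^ 2) n2' * qPoch (p ^ 2) (p ^ 2) n3') /
          (qPoch (p ^ 2) (p ^ 2) n1 * qPoch (p ^ 2) (p ^ 2) n2 * qPoch (p ^ 2) (p ^ 2) n3)
      from by ring_nf]
    congr 1
    congr 1
    exact if_congr (by omega) rfl rfl
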